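/- Let i, j be integers with 1 ≤ i < j. If a, b, c ∈ ℂ[X,Y] satisfy a·Y^i + b·X^{j−i} = 0 and −a·X^i + c·Y^{j−i} = 0, then there exists u ∈ ℂ[X,Y] with a = u·(XY)^{j−i}, b = −u·Y^j, and c = u·X^j. -/

import Mathlib

open MvPolynomial

lemma not_dvd_X01 : ¬ (X 0 : MvPolynomial (Fin 2) ℂ) ∣ X 1 := by
  rintro ⟨d, hd⟩
  have := congrArg (eval (fun k => if k = 0 then 0 else 1)) hd
  simp at this

lemma not_dvd_X10 : ¬ (X 1 : MvPolynomial (Fin 2) ℂ) ∣ X 0 := by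
  rintro ⟨d, hd⟩
  have := congrArg (eval (fun k => if k = 0 then 1 else 0)) hd
  simp at this

/-- Let `i, j` be integers with `1 ≤ i < j`.  If `a, b, c ∈ ℂ[X,Y]` satisfy
`a·Yⁱ + b·X^{j-i} = 0` and `-a·Xⁱ + c·Y^{j-i} = 0`, then there exists `u ∈ ℂ[X,Y]`
with `a = u·(XY)^{j-i}`, `b = -u·Yʲ` and `c = u·Xʲ`. -/
theorem stmt_15 (i j : ℕ) (hi : 1 ≤ i) (hij : i < j) (a b c : MvPolynomial (Fin 2) ℂ)
    (h1 : a * X 1 ^ i + b * X 0 ^ (j - i) = 0)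
    (h2 : -a * X 0 ^ i + c * X 1 ^ (j - i) = 0) :
    ∃ u : MvPolynomial (Fin 2) ℂ,
      a = u * (X 0 * X 1) ^ (j - i) ∧ b = -u * X 1 ^ j ∧ c = u * X 0 ^ j := by
  obtain ⟨k, rfl⟩ : ∃ k, j = k + i := ⟨j - i, (Nat.sub_add_cancel hij.le).symm⟩
  rw [Nat.add_sub_cancel] at h1 h2 ⊢
  have hX0 : Prime (X 0 : MvPolynomial (Fin 2) ℂ) := by
    rw [← MulEquiv.prime_iff (finSuccEquiv ℂ 1).toMulEquiv]
    simpa [finSuccEquiv_X_zero] using Polynomial.prime_X (R := MvPolynomial (Fin 1) ℂ)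
  have hX1 : Prime (X 1 : MvPolynomial (Fin 2) ℂ) := by
    have := (MulEquiv.prime_iff (renameEquiv ℂ (Equiv.swap (0:Fin 2) 1)).toMulEquiv).mpr hX0
    simpa using this
  have hn10 : ¬ (X 1 : MvPolynomial (Fin 2) ℂ) ∣ X 0 ^ i :=
    fun h => not_dvd_X10 (hX1.dvd_of_dvd_pow h)
  have hn01 : ¬ (X 0 : MvPolynomial (Fin 2) ℂ) ∣ X 1 ^ k :=
    fun h => not_dvd_X01 (hX0.dvd_of_dvd_pow h)
  have hd1 : (X 1 : MvPolynomial (Fin 2) ℂ) ^ k ∣ a :=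
    hX1.pow_dvd_of_dvd_mul_right k hn10 ⟨c, by linear_combination -h2⟩
  obtain ⟨v, hv⟩ := hd1
  have hn01i : ¬ (X 0 : MvPolynomial (Fin 2) ℂ) ∣ X 1 ^ i :=
    fun h => not_dvd_X01 (hX0.dvd_of_dvd_pow h)
  have hd0' : (X 0 : MvPolynomial (Fin 2) ℂ) ^ k ∣ a :=
    hX0.pow_dvd_of_dvd_mul_right k hn01i ⟨-b, by linear_combination h1⟩
  have hd0 : (X 0 : MvPolynomial (Fin 2) ℂ) ^ k ∣ v :=
    hX0.pow_dvd_of_dvd_mul_left k hn01 (hv ▸ hd0')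
  obtain ⟨u, hu⟩ := hd0
  have ha : a = u * (X 0 * X 1) ^ k := by rw [hv, hu]; ring
  have h0ne : (X 0 : MvPolynomial (Fin 2) ℂ) ^ k ≠ 0 := pow_ne_zero _ (X_ne_zero 0)
  have h1ne : (X 1 : MvPolynomial (Fin 2) ℂ) ^ k ≠ 0 := pow_ne_zero _ (X_ne_zero 1)
  refine ⟨u, ha, ?_, ?_⟩
  · apply mul_right_cancel₀ h0ne
    linear_combination h1 - X 1 ^ i * ha
  · apply mul_right_cancel₀ h1ne
    linear_combination h2 + X 0 ^ i * ha
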